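/- Let T : Sp(1) × Sp(1) → Sp(1) × Sp(1) be defined by T(u,v) = conjugate of (1,j)⁻¹ · (u,v) · (1,j), i.e., T(u,v) = (ū, conj(j⁻¹ v j)). Then the fixed point set of T is {(ε, x₀ + x₁ i + x₃ k) : ε ∈ {1,-1}, x₀² + x₁² + x₃² = 1}, i.e., T(u,v) = (u,v) if and only if u = ±1 and the j-component of v vanishes. -/

import Mathlib

open Quaternion

/-- Fixed point set of `T(u,v) = (ū, conj(j⁻¹ v j))` on `Sp(1) × Sp(1)`:
`T(u,v) = (u,v)` iff `u = ±1` and the `j`-component of `v` vanishes. -/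
theorem stmt_6 (u v : ℍ[ℝ]) (hu : ‖u‖ = 1) (hv : ‖v‖ = 1) :
    let j : ℍ[ℝ] := ⟨0, 0, 1, 0⟩
    (star u = u ∧ star (j⁻¹ * v * j) = v) ↔ ((u = 1 ∨ u = -1) ∧ v.imJ = 0) := by
  intro j
  have hjinv : j⁻¹ = ⟨0, 0, -1, 0⟩ := by
    apply inv_eq_of_mul_eq_one_right
    set k : ℍ[ℝ] := ⟨0, 0, -1, 0⟩
    ext <;> simp [Quaternion.re_mul, Quaternion.imI_mul, Quaternion.imJ_mul,
      Quaternion.imK_mul] <;> simp [j, k]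
  have hnu : Quaternion.normSq u = 1 := by
    rw [Quaternion.normSq_eq_norm_mul_self, hu]; norm_num
  rw [hjinv]
  set k : ℍ[ℝ] := ⟨0, 0, -1, 0⟩
  simp only [Quaternion.ext_iff, Quaternion.re_mul, Quaternion.imI_mul, Quaternion.imJ_mul,
    Quaternion.imK_mul, Quaternion.re_star, Quaternion.imI_star, Quaternion.imJ_star,
    Quaternion.imK_star, Quaternion.re_one, Quaternion.imI_one, Quaternion.imJ_one,
    Quaternion.imK_one, Quaternion.re_neg, Quaternion.imI_neg, Quaternion.imJ_neg,
    Quaternion.imK_neg, neg_zero]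
  simp only [j, k, neg_zero]
  have hsq := Quaternion.normSq_def' u
  rw [hnu] at hsq
  constructor
  · rintro ⟨⟨h1, h2, h3, h4⟩, h5, h6, h7, h8⟩
    have hi : u.imI = 0 := by linarith
    have hj2 : u.imJ = 0 := by linarith
    have hk : u.imK = 0 := by linarith
    have hre : u.re * u.re = 1 := by nlinarith
    rcases mul_self_eq_one_iff.mp hre with h | h
    · exact ⟨Or.inl ⟨h, hi, hj2, hk⟩, by linarith⟩
    · exact ⟨Or.inr ⟨h, hi, hj2, hk⟩, by linarith⟩
  · rintro ⟨h | h, hJ⟩ <;> obtain ⟨ha, hb, hc, hd⟩ := h <;>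
      refine ⟨⟨trivial, ?_, ?_, ?_⟩, ?_, ?_, ?_, ?_⟩ <;> ring_nf <;> linarith
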